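/- For all positive integers x₁ and n, setting x₀ = n(2x₁² + 1) + x₁, the continued fraction [x₀; x₁, 2x₁, x₀, 2x₁, x₁, 2x₀ repeated] equals √(x₀² + 4n·x₁ + 2). -/

import Mathlib

set_option maxHeartbeats 2000000


/-- The value of a finite continued fraction [x₀; x₁, ..., xₙ]. -/
noncomputable def cfFinite : List ℝ → ℝ
  | [] => 0
  | [x] => x
  | x :: y :: xs => x + (cfFinite (y :: xs))⁻¹

/-- The eventually periodic sequence with initial term `a₀` and repeating block `L`. -/
def periodicSeq (a₀ : ℕ) (L : List ℕ) : ℕ → ℕ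
  | 0 => a₀
  | n + 1 => L.getD (n % L.length) 0

/-- `x` is the value of the infinite continued fraction with partial quotients `a`,
i.e. the limit of the finite convergents. -/
def cfValue (a : ℕ → ℕ) (x : ℝ) : Prop :=
  Filter.Tendsto
    (fun n => cfFinite (((List.range (n + 1)).map a).map (fun k : ℕ => (k : ℝ))))
    Filter.atTop (nhds x)

/-- `x` is the value of the infinite periodic continued fraction
`[a₀; L repeated]`. -/
def IsPeriodicCF (a₀ : ℕ) (L : List ℕ) (x : ℝ) : Prop :=
  cfValue (periodicSeq a₀ L) x

/-- `P` is the minimal period length of the continued fraction expansion of `√D`. -/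
def IsMinPeriodCF (D P : ℕ) : Prop :=
  0 < P ∧
  (∃ L : List ℕ, L.length = P ∧ IsPeriodicCF (Nat.sqrt D) L (Real.sqrt D)) ∧
  ∀ Q : ℕ, 0 < Q → Q < P →
    ¬ ∃ L : List ℕ, L.length = Q ∧ IsPeriodicCF (Nat.sqrt D) L (Real.sqrt D)


theorem cfFinite_cons (x : ℝ) (L : List ℝ) (h : L ≠ []) :
    cfFinite (x :: L) = x + (cfFinite L)⁻¹ := by
  match L with
  | [] => exact absurd rfl h
  | y :: xs => rfl

theorem cfFinite_ge_one : ∀ (l : List ℝ) (t : ℝ), (∀ y ∈ l, 1 ≤ y) → 1 ≤ t →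
    1 ≤ cfFinite (l ++ [t])
  | [], t, _, ht => ht
  | x :: l, t, hl, ht => by
    rw [List.cons_append, cfFinite_cons x (l ++ [t]) (by simp)]
    have h1 : 1 ≤ cfFinite (l ++ [t]) :=
      cfFinite_ge_one l t (fun y hy => hl y (List.mem_cons_of_mem _ hy)) ht
    have hx : 1 ≤ x := hl x (List.mem_cons_self)
    have : 0 ≤ (cfFinite (l ++ [t]))⁻¹ := by positivity
    linarith

theorem cf_contract : ∀ (l : List ℝ) (t t' : ℝ), (∀ y ∈ l, 1 ≤ y) → 1 ≤ t → 1 ≤ t' →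
    |cfFinite (l ++ [t]) - cfFinite (l ++ [t'])| ≤ 2 * (1/2)^l.length * |t - t'|
  | [], t, t', _, ht, ht' => by
    simp only [List.nil_append, List.length_nil, pow_zero, mul_one]
    show |cfFinite [t] - cfFinite [t']| ≤ 2 * |t - t'|
    have : cfFinite [t] = t := rfl
    have : cfFinite [t'] = t' := rfl
    simp only [show cfFinite [t] = t from rfl, show cfFinite [t'] = t' from rfl]
    nlinarith [abs_nonneg (t - t')]
  | [b], t, t', hl, ht, ht' => by
    have hb : 1 ≤ b := hl b (List.mem_cons_self)
    show |cfFinite [b, t] - cfFinite [b, t']| ≤ 2 * (1/2)^1 * |t - t'|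
    have e1 : cfFinite [b, t] = b + t⁻¹ := rfl
    have e2 : cfFinite [b, t'] = b + t'⁻¹ := rfl
    rw [e1, e2]
    have ht0 : (0:ℝ) < t := by linarith
    have ht0' : (0:ℝ) < t' := by linarith
    have : b + t⁻¹ - (b + t'⁻¹) = (t' - t) / (t * t') := by field_simp; ring
    rw [this, abs_div, abs_of_pos (by positivity : (0:ℝ) < t * t')]
    rw [abs_sub_comm]
    have h1 : (1:ℝ) ≤ t * t' := by nlinarith
    calc |t - t'| / (t * t') ≤ |t - t'| / 1 :=
          div_le_div_of_nonneg_left (abs_nonneg _) one_pos h1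
      _ = |t - t'| := by ring
      _ ≤ 2 * (1/2)^1 * |t - t'| := by norm_num
  | b :: c :: r, t, t', hl, ht, ht' => by
    have hb : 1 ≤ b := hl b (by simp)
    have hc : 1 ≤ c := hl c (by simp)
    have hr : ∀ y ∈ r, 1 ≤ y := fun y hy => hl y (by simp [hy])
    set v := cfFinite (r ++ [t]) with hv
    set v' := cfFinite (r ++ [t']) with hv'
    have hv1 : 1 ≤ v := cfFinite_ge_one r t hr ht
    have hv1' : 1 ≤ v' := cfFinite_ge_one r t' hr ht'
    have ih : |v - v'| ≤ 2 * (1/2)^r.length * |t - t'| := cf_contract r t t' hr ht ht'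
    have e1 : cfFinite ((b :: c :: r) ++ [t]) = b + (c + v⁻¹)⁻¹ := by
      rw [List.cons_append, cfFinite_cons b _ (by simp), List.cons_append,
        cfFinite_cons c _ (by simp)]
    have e2 : cfFinite ((b :: c :: r) ++ [t']) = b + (c + v'⁻¹)⁻¹ := by
      rw [List.cons_append, cfFinite_cons b _ (by simp), List.cons_append,
        cfFinite_cons c _ (by simp)]
    rw [e1, e2]
    have hv0 : (0:ℝ) < v := by linarith
    have hv0' : (0:ℝ) < v' := by linarith
    have h1 : c*v + 1 > 0 := by nlinarith
    have h2 : c*v' + 1 > 0 := by nlinarith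
    have h3 : c + v⁻¹ > 0 := by positivity
    have h3' : c + v'⁻¹ > 0 := by positivity
    have hd : b + (c + v⁻¹)⁻¹ - (b + (c + v'⁻¹)⁻¹) = (v - v') / ((c*v + 1) * (c*v' + 1)) := by
      field_simp
      ring
    rw [hd, abs_div, abs_of_pos (by nlinarith : (0:ℝ) < (c*v+1)*(c*v'+1))]
    have hcv : 1 ≤ c*v := one_le_mul_of_one_le_of_one_le hc hv1
    have hcv' : 1 ≤ c*v' := one_le_mul_of_one_le_of_one_le hc hv1'
    have h4 : (4:ℝ) ≤ (c*v+1)*(c*v'+1) := by nlinarith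
    have hlen : ((b :: c :: r) : List ℝ).length = r.length + 2 := by simp
    calc |v - v'| / ((c*v+1)*(c*v'+1)) ≤ |v - v'| / 4 :=
          div_le_div_of_nonneg_left (abs_nonneg _) (by norm_num) h4
      _ ≤ (2 * (1/2)^r.length * |t - t'|) / 4 := by gcongr
      _ = 2 * (1/2)^((b :: c :: r) : List ℝ).length * |t - t'| := by
          rw [hlen]; ring

theorem cfFinite_append_pair : ∀ (l : List ℝ) (a s : ℝ), s ≠ 0 →
    cfFinite (l ++ [a + s⁻¹]) = cfFinite (l ++ [a, s])
  | [], a, s, hs => by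
    show cfFinite [a + s⁻¹] = cfFinite [a, s]
    rfl
  | x :: l, a, s, hs => by
    rw [List.cons_append, List.cons_append, cfFinite_cons x _ (by simp),
      cfFinite_cons x _ (by simp), cfFinite_append_pair l a s hs]

theorem cfValue_of_quotients (a : ℕ → ℕ) (ha : ∀ k, 1 ≤ a k) (ξ : ℕ → ℝ)
    (hξ1 : ∀ k, 1 ≤ ξ (k + 1))
    (hξ : ∀ k, ξ k = a k + (ξ (k + 1))⁻¹) :
    Filter.Tendsto
      (fun m => cfFinite (((List.range (m + 1)).map a).map (fun k : ℕ => (k : ℝ))))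
      Filter.atTop (nhds (ξ 0)) := by
  set b : ℕ → ℝ := fun k => ((a k : ℕ) : ℝ) with hb
  have hb1 : ∀ k, (1:ℝ) ≤ b k := fun k => by simp only [hb]; exact_mod_cast ha k
  have hmap : ∀ m, ((List.range m).map a).map (fun k : ℕ => (k : ℝ))
      = (List.range m).map b := fun m => by simp [hb, List.map_map, Function.comp]
  -- ξ 0 = cfFinite (prefix m ++ [ξ m])
  have key : ∀ m, ξ 0 = cfFinite ((List.range m).map b ++ [ξ m]) := by
    intro m
    induction m with
    | zero => simp [cfFinite]
    | succ m ih =>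
      have hne : ξ (m + 1) ≠ 0 := by have := hξ1 m; linarith
      rw [ih, hξ m, cfFinite_append_pair _ _ _ hne, List.range_succ, List.map_append]
      simp
      rfl
  have hξ0 : ∀ m, 1 ≤ ξ m := by
    intro m
    cases m with
    | zero =>
      rw [hξ 0]
      have h1 := hξ1 0
      have : (0:ℝ) ≤ (ξ 1)⁻¹ := by positivity
      have := hb1 0
      simp only [hb] at this
      linarith [ha 0, (by exact_mod_cast ha 0 : (1:ℝ) ≤ (a 0 : ℝ))]
    | succ m => exact hξ1 m
  have bound : ∀ m, |cfFinite ((List.range (m+1)).map b) - ξ 0| ≤ 2 * (1/2)^m := by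
    intro m
    have hsplit : (List.range (m+1)).map b = (List.range m).map b ++ [b m] := by
      rw [List.range_succ, List.map_append]; rfl
    rw [hsplit, key m]
    have hl : ∀ y ∈ (List.range m).map b, 1 ≤ y := by
      intro y hy
      obtain ⟨k, _, rfl⟩ := List.mem_map.mp hy
      exact hb1 k
    have h := cf_contract ((List.range m).map b) (b m) (ξ m) hl (hb1 m) (hξ0 m)
    have hdiff : |b m - ξ m| ≤ 1 := by
      rw [hξ m]
      have h1 := hξ1 m
      have hpos : (0:ℝ) < (ξ (m+1))⁻¹ := by positivity
      have hle : (ξ (m+1))⁻¹ ≤ 1 := by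
        rw [inv_le_one_iff₀]; right; exact h1
      rw [hb]
      rw [show ((a m : ℕ):ℝ) - ((a m : ℝ) + (ξ (m+1))⁻¹) = -((ξ (m+1))⁻¹) by push_cast; ring,
        abs_neg, abs_of_pos hpos]
      exact hle
    have hlen : ((List.range m).map b).length = m := by simp
    calc |cfFinite ((List.range m).map b ++ [b m]) -
          cfFinite ((List.range m).map b ++ [ξ m])|
        ≤ 2 * (1/2)^((List.range m).map b).length * |b m - ξ m| := h
      _ ≤ 2 * (1/2)^m * 1 := by
          rw [hlen]; gcongr
      _ = 2 * (1/2)^m := by ring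
  have htend : Filter.Tendsto (fun m : ℕ => 2 * (1/2:ℝ)^m) Filter.atTop (nhds 0) := by
    rw [show (0:ℝ) = 2 * 0 by ring]
    exact (tendsto_pow_atTop_nhds_zero_of_lt_one (by norm_num) (by norm_num)).const_mul 2
  have : Filter.Tendsto (fun m => cfFinite ((List.range (m+1)).map b) - ξ 0)
      Filter.atTop (nhds 0) :=
    squeeze_zero_norm bound htend
  have h2 := this.add_const (ξ 0)
  simp only [sub_add_cancel, zero_add] at h2
  simpa only [hmap] using h2

theorem cf_step (s P P' Q Q' A : ℝ) (hQ : Q ≠ 0) (hP' : 0 < s + P') (hQ' : Q' ≠ 0)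
    (h1 : P + P' = A * Q) (h2 : Q * Q' = s ^ 2 - P' ^ 2) :
    (s + P) / Q = A + ((s + P') / Q')⁻¹ := by
  rw [inv_div]
  have h3 : A + Q' / (s + P') = (A * (s + P') + Q') / (s + P') := by
    field_simp
  rw [h3, div_eq_div_iff hQ (ne_of_gt hP')]
  linear_combination (s + P') * h1 - h2

noncomputable def xiAux (s X N X1 : ℝ) : ℕ → ℝ
  | 0 => s
  | k + 1 =>
    if k % 6 = 0 then (s + X) / (4 * N * X1 + 2)
    else if k % 6 = 1 then (s + (X - 2 * N)) / (2 * N * X1 + 1)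
    else if k % 6 = 2 then (s + X) / 2
    else if k % 6 = 3 then (s + X) / (2 * N * X1 + 1)
    else if k % 6 = 4 then (s + (X - 2 * N)) / (4 * N * X1 + 2)
    else s + X

theorem cf_aux_main (x₁ n : ℕ) (hx₁ : 0 < x₁) (hn : 0 < n) :
    Filter.Tendsto
      (fun m => cfFinite (((List.range (m + 1)).map
        (periodicSeq (n * (2 * x₁ ^ 2 + 1) + x₁)
          [x₁, 2 * x₁, n * (2 * x₁ ^ 2 + 1) + x₁, 2 * x₁, x₁,
            2 * (n * (2 * x₁ ^ 2 + 1) + x₁)])).map (fun k : ℕ => (k : ℝ))))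
      Filter.atTop
      (nhds (Real.sqrt (((n * (2 * x₁ ^ 2 + 1) + x₁) ^ 2 + 4 * n * x₁ + 2 : ℕ)))) := by
  set x₀ : ℕ := n * (2 * x₁ ^ 2 + 1) + x₁ with hx₀
  set L : List ℕ := [x₁, 2 * x₁, x₀, 2 * x₁, x₁, 2 * x₀] with hL
  set a : ℕ → ℕ := periodicSeq x₀ L with ha_def
  set D : ℕ := x₀ ^ 2 + 4 * n * x₁ + 2 with hD
  set s : ℝ := Real.sqrt (D : ℝ) with hs
  set N : ℝ := (n : ℝ) with hN
  set X1 : ℝ := (x₁ : ℝ) with hX1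
  set X : ℝ := (x₀ : ℝ) with hX
  have hN1 : 1 ≤ N := by rw [hN]; exact_mod_cast Nat.one_le_iff_ne_zero.mpr hn.ne'
  have hX11 : 1 ≤ X1 := by rw [hX1]; exact_mod_cast Nat.one_le_iff_ne_zero.mpr hx₁.ne'
  have hXval : X = 2 * N * X1 ^ 2 + N + X1 := by rw [hX, hx₀]; push_cast; ring
  have hs0 : 0 ≤ s := Real.sqrt_nonneg _
  have hs2 : s ^ 2 = X ^ 2 + 4 * N * X1 + 2 := by
    rw [hs, Real.sq_sqrt (by positivity : (0:ℝ) ≤ (D:ℝ))]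
    rw [hD]; push_cast; ring
  have hXs : X ≤ s := by nlinarith [sq_nonneg (s - X), sq_nonneg (s + X)]
  have hX1' : 1 ≤ X := by nlinarith
  have haL : ∀ k, a (k + 1) = L.getD (k % 6) 0 := by
    intro k; rw [ha_def]; rfl
  have ha00 : a 0 = x₀ := rfl
  have hx₀1 : 1 ≤ x₀ := by rw [hx₀]; have := hx₁; omega
  clear_value X X1 N s D a L x₀
  set ξ : ℕ → ℝ := xiAux s X N X1 with hξ_def
  clear_value ξ
  have ha1 : ∀ k, 1 ≤ a k := by
    intro k
    cases k with
    | zero => rw [ha00]; exact hx₀1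
    | succ k =>
      rw [haL]
      have h6 : k % 6 < 6 := Nat.mod_lt _ (by norm_num)
      interval_cases h : k % 6 <;> simp [hL] <;> omega
  have hNX1 : 1 ≤ N * X1 := one_le_mul_of_one_le_of_one_le hN1 hX11
  have hNX11 : 0 ≤ 4 * N * X1 * (X1 - 1) :=
    mul_nonneg (mul_nonneg (mul_nonneg (by norm_num) (by linarith)) (by linarith)) (by linarith)
  have hkey : 4 * N * X1 + 2 ≤ 2 * X := by nlinarith
  have hkey2 : 2 * N * X1 + 1 + 2 * N ≤ 2 * X := by nlinarith
  have hkey3 : 4 * N * X1 + 2 + 2 * N ≤ 2 * X := by nlinarith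
  have hxi1 : ∀ k, 1 ≤ ξ (k + 1) := by
    intro k
    have h6 : k % 6 < 6 := Nat.mod_lt _ (by norm_num)
    rw [hξ_def]
    interval_cases h : k % 6 <;>
      simp only [xiAux, h, if_true, if_false] <;> norm_num <;>
      first
      | (rw [le_div_iff₀ (by linarith)]; linarith)
      | linarith
  have hQ1 : (0:ℝ) < 4 * N * X1 + 2 := by nlinarith
  have hQ2 : (0:ℝ) < 2 * N * X1 + 1 := by nlinarith
  have hsq1 : (1:ℝ) ≤ X1 ^ 2 := by nlinarith
  have hX2N : 2 * N + 1 ≤ X := by nlinarith [mul_le_mul_of_nonneg_left hsq1 (by linarith : (0:ℝ) ≤ 2*N)]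
  have hPX : (0:ℝ) < s + X := by linarith
  have hPX2 : (0:ℝ) < s + (X - 2 * N) := by linarith
  have hxistep : ∀ k, ξ k = a k + (ξ (k + 1))⁻¹ := by
    intro k
    cases k with
    | zero =>
      show ξ 0 = (a 0 : ℝ) + (ξ 1)⁻¹
      have ha0 : (a 0 : ℝ) = X := by rw [ha00, hX]
      have h0 : ξ 0 = s := by rw [hξ_def]; rfl
      have hξ1 : ξ 1 = (s + X) / (4 * N * X1 + 2) := by
        rw [hξ_def]; simp [xiAux]
      rw [h0, ha0, hξ1]
      have := cf_step s 0 X 1 (4 * N * X1 + 2) X (by norm_num)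
        hPX hQ1.ne' (by ring) (by linear_combination -hs2)
      simpa using this
    | succ k =>
      have h6 : k % 6 < 6 := Nat.mod_lt _ (by norm_num)
      rw [haL]
      interval_cases h : k % 6
      · have hm : (k + 1) % 6 = 1 := by omega
        have e1 : ξ (k + 1) = (s + X) / (4 * N * X1 + 2) := by
          rw [hξ_def]; simp only [xiAux, h]; norm_num
        have e2 : ξ (k + 2) = (s + (X - 2 * N)) / (2 * N * X1 + 1) := by
          rw [hξ_def]
          show xiAux s X N X1 (k + 1 + 1) = _
          simp only [xiAux, hm]; norm_num
        have hg : ((L.getD 0 0 : ℕ) : ℝ) = X1 := by rw [hL, hX1]; norm_num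
        rw [e1, e2, hg]
        exact cf_step s X (X - 2*N) (4*N*X1+2) (2*N*X1+1) X1 hQ1.ne' hPX2 hQ2.ne'
          (by linear_combination 2 * hXval) (by linear_combination -hs2 - 4*N*hXval)
      · have hm : (k + 1) % 6 = 2 := by omega
        have e1 : ξ (k + 1) = (s + (X - 2 * N)) / (2 * N * X1 + 1) := by
          rw [hξ_def]; simp only [xiAux, h]; norm_num
        have e2 : ξ (k + 2) = (s + X) / 2 := by
          rw [hξ_def]
          show xiAux s X N X1 (k + 1 + 1) = _
          simp only [xiAux, hm]; norm_num
        have hg : ((L.getD 1 0 : ℕ) : ℝ) = 2 * X1 := by rw [hL, hX1]; norm_num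
        rw [e1, e2, hg]
        exact cf_step s (X - 2*N) X (2*N*X1+1) 2 (2*X1) hQ2.ne' hPX (by norm_num)
          (by linear_combination 2 * hXval) (by linear_combination -hs2)
      · have hm : (k + 1) % 6 = 3 := by omega
        have e1 : ξ (k + 1) = (s + X) / 2 := by
          rw [hξ_def]; simp only [xiAux, h]; norm_num
        have e2 : ξ (k + 2) = (s + X) / (2 * N * X1 + 1) := by
          rw [hξ_def]
          show xiAux s X N X1 (k + 1 + 1) = _
          simp only [xiAux, hm]; norm_num
        have hg : ((L.getD 2 0 : ℕ) : ℝ) = X := by rw [hL, hX]; norm_num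
        rw [e1, e2, hg]
        exact cf_step s X X 2 (2*N*X1+1) X (by norm_num) hPX hQ2.ne'
          (by ring) (by linear_combination -hs2)
      · have hm : (k + 1) % 6 = 4 := by omega
        have e1 : ξ (k + 1) = (s + X) / (2 * N * X1 + 1) := by
          rw [hξ_def]; simp only [xiAux, h]; norm_num
        have e2 : ξ (k + 2) = (s + (X - 2 * N)) / (4 * N * X1 + 2) := by
          rw [hξ_def]
          show xiAux s X N X1 (k + 1 + 1) = _
          simp only [xiAux, hm]; norm_num
        have hg : ((L.getD 3 0 : ℕ) : ℝ) = 2 * X1 := by rw [hL, hX1]; norm_num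
        rw [e1, e2, hg]
        exact cf_step s X (X - 2*N) (2*N*X1+1) (4*N*X1+2) (2*X1) hQ2.ne' hPX2 hQ1.ne'
          (by linear_combination 2 * hXval) (by linear_combination -hs2 - 4*N*hXval)
      · have hm : (k + 1) % 6 = 5 := by omega
        have e1 : ξ (k + 1) = (s + (X - 2 * N)) / (4 * N * X1 + 2) := by
          rw [hξ_def]; simp only [xiAux, h]; norm_num
        have e2 : ξ (k + 2) = (s + X) / 1 := by
          rw [hξ_def]
          show xiAux s X N X1 (k + 1 + 1) = _
          simp only [xiAux, hm]; norm_num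
        have hg : ((L.getD 4 0 : ℕ) : ℝ) = X1 := by rw [hL, hX1]; norm_num
        rw [e1, e2, hg]
        exact cf_step s (X - 2*N) X (4*N*X1+2) 1 X1 hQ1.ne' hPX (by norm_num)
          (by linear_combination 2 * hXval) (by linear_combination -hs2)
      · have hm : (k + 1) % 6 = 0 := by omega
        have e1 : ξ (k + 1) = (s + X) / 1 := by
          rw [hξ_def]; simp only [xiAux, h]; norm_num
        have e2 : ξ (k + 2) = (s + X) / (4 * N * X1 + 2) := by
          rw [hξ_def]
          show xiAux s X N X1 (k + 1 + 1) = _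
          simp only [xiAux, hm]; norm_num
        have hg : ((L.getD 5 0 : ℕ) : ℝ) = 2 * X := by rw [hL, hX]; norm_num
        rw [e1, e2, hg]
        exact cf_step s X X 1 (4*N*X1+2) (2*X) (by norm_num) hPX hQ1.ne'
          (by ring) (by linear_combination -hs2)
  have main := cfValue_of_quotients a ha1 ξ hxi1 hxistep
  have hξ0 : ξ 0 = s := by rw [hξ_def]; rfl
  rw [hξ0] at main
  exact main

theorem cf_value_culminating_six (x₁ n : ℕ) (hx₁ : 0 < x₁) (hn : 0 < n) :
    IsPeriodicCF (n * (2 * x₁ ^ 2 + 1) + x₁)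
      [x₁, 2 * x₁, n * (2 * x₁ ^ 2 + 1) + x₁, 2 * x₁, x₁,
        2 * (n * (2 * x₁ ^ 2 + 1) + x₁)]
      (Real.sqrt (((n * (2 * x₁ ^ 2 + 1) + x₁) ^ 2 + 4 * n * x₁ + 2 : ℕ))) := cf_aux_main x₁ n hx₁ hn
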